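/- For all real x, Σ_{i=1}^∞ x^{2i-1}/(2i-1)!! = e^{x²/2} ∫_0^x e^{-y²/2} dy. -/

import Mathlib

open Real

/-- `oddFact k = (2k-1)!!`, with `oddFact 0 = (-1)!! = 1`. -/
def oddFact : ℕ → ℕ
  | 0 => 1
  | k + 1 => (2 * k + 1) * oddFact k

lemma oddFact_pos (n : ℕ) : 0 < oddFact n := by
  induction n with
  | zero => simp [oddFact]
  | succ k ih =>
    have : oddFact (k+1) = (2*k+1) * oddFact k := rfl
    rw [this]; positivity

lemma oddFact_pos' (n : ℕ) : (0:ℝ) < (oddFact n : ℝ) := by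
  exact_mod_cast oddFact_pos n

lemma oddFact_succ (n : ℕ) : (oddFact (n+1) : ℝ) = (2*(n:ℝ)+1) * oddFact n := by
  have : oddFact (n+1) = (2*n+1) * oddFact n := rfl
  rw [this]; push_cast; ring

lemma factorial_le_oddFact (n : ℕ) : n.factorial ≤ oddFact n := by
  induction n with
  | zero => simp [oddFact]
  | succ k ih =>
    have h1 : oddFact (k+1) = (2*k+1) * oddFact k := rfl
    rw [h1, Nat.factorial_succ]
    exact Nat.mul_le_mul (by omega) ih

lemma factorial_le_oddFact' (n : ℕ) : (n.factorial : ℝ) ≤ (oddFact n : ℝ) := by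
  exact_mod_cast factorial_le_oddFact n

/-- The summable bound on derivatives. -/
lemma summable_u (R : ℝ) : Summable (fun n : ℕ => R ^ (2 * n) / (oddFact n : ℝ)) := by
  refine Summable.of_norm_bounded (Real.summable_pow_div_factorial (R^2)) (fun n => ?_)
  rw [Real.norm_eq_abs, abs_div, abs_of_pos (oddFact_pos' _), abs_pow, pow_mul, sq_abs]
  gcongr
  exact factorial_le_oddFact n

lemma summable_S (x : ℝ) : Summable (fun n : ℕ => x ^ (2 * n + 1) / (oddFact (n + 1) : ℝ)) := by
  refine Summable.of_norm_bounded
    ((Real.summable_pow_div_factorial (x^2)).mul_left |x|) (fun n => ?_)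
  rw [Real.norm_eq_abs, abs_div, abs_of_pos (oddFact_pos' _), pow_succ', abs_mul, abs_pow,
    pow_mul, sq_abs, mul_div_assoc]
  gcongr
  exact (factorial_le_oddFact n).trans
    (Nat.le_of_dvd (oddFact_pos _) ⟨2*n+1, Nat.mul_comm (2*n+1) (oddFact n)⟩)

noncomputable def S (x : ℝ) : ℝ := ∑' n : ℕ, x ^ (2 * n + 1) / (oddFact (n + 1) : ℝ)

lemma hasDerivAt_S (x : ℝ) : HasDerivAt S (1 + x * S x) x := by
  set R : ℝ := |x| + 1 with hR
  have hxR : x ∈ Metric.ball (0:ℝ) R := by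
    simp [Real.dist_eq, hR]
  have key : HasDerivAt S (∑' n : ℕ, x ^ (2 * n) / (oddFact n : ℝ)) x := by
    apply hasDerivAt_tsum_of_isPreconnected (summable_u R) Metric.isOpen_ball
      (Convex.isPreconnected (convex_ball (0:ℝ) R))
      (g := fun n y => y ^ (2*n+1) / (oddFact (n+1) : ℝ))
      (g' := fun n y => y ^ (2 * n) / (oddFact n : ℝ)) (y₀ := 0)
    · intro n y _
      have h := (hasDerivAt_pow (2*n+1) y).div_const (oddFact (n+1) : ℝ)
      convert! h using 1
      rw [oddFact_succ]
      have h1 : (oddFact n : ℝ) ≠ 0 := ne_of_gt (oddFact_pos' n)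
      have h2 : (2*(n:ℝ)+1) ≠ 0 := by positivity
      field_simp
      push_cast
      ring
    · intro n y hy
      have hyR : |y| ≤ R := by
        simp [Real.dist_eq] at hy; linarith
      rw [Real.norm_eq_abs, abs_div, abs_of_pos (oddFact_pos' _), abs_pow]
      gcongr
    · exact Metric.mem_ball_self (by positivity)
    · apply Summable.of_norm_bounded (summable_zero : Summable (fun _ : ℕ => (0:ℝ)))
      intro n; simp
    · exact hxR
  have heq : (∑' n : ℕ, x ^ (2 * n) / (oddFact n : ℝ)) = 1 + x * S x := by
    rw [Summable.tsum_eq_zero_add]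
    · congr 1
      · simp [oddFact]
      · rw [S, ← tsum_mul_left]
        congr 1; ext n
        rw [show 2 * (n+1) = (2*n+1) + 1 by ring, pow_succ']
        ring
    · refine Summable.of_norm_bounded (summable_u |x|) (fun n => ?_)
      rw [Real.norm_eq_abs, abs_div, abs_of_pos (oddFact_pos' _), abs_pow]
  rw [heq] at key; exact key

/-- For all real `x`, `∑_{i=1}^∞ x^{2i-1}/(2i-1)!! = e^{x²/2} ∫_0^x e^{-y²/2} dy`. -/
theorem stmt1 (x : ℝ) :
    ∑' n : ℕ, x ^ (2 * (n + 1) - 1) / (oddFact (n + 1) : ℝ) =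
      Real.exp (x ^ 2 / 2) * ∫ y in (0:ℝ)..x, Real.exp (-y ^ 2 / 2) := by
  have hsum : (∑' n : ℕ, x ^ (2 * (n + 1) - 1) / (oddFact (n + 1) : ℝ)) = S x := by
    rw [S]; congr 1
  rw [hsum]
  -- FTC for g y = exp(-y²/2) * S y
  have hg : ∀ y : ℝ, HasDerivAt (fun z => Real.exp (-z^2/2) * S z) (Real.exp (-y^2/2)) y := by
    intro y
    have h1 : HasDerivAt (fun z : ℝ => Real.exp (-z^2/2)) (Real.exp (-y^2/2) * (-y)) y := by
      have h2 : HasDerivAt (fun z : ℝ => -z^2/2) (-y) y := by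
        have := ((hasDerivAt_pow 2 y).neg).div_const 2
        convert! this using 1
        simp; ring
      exact (Real.hasDerivAt_exp _).comp y h2
    have := h1.mul (hasDerivAt_S y)
    convert! this using 1
    ring
  have hint : ∫ y in (0:ℝ)..x, Real.exp (-y^2/2) =
      Real.exp (-x^2/2) * S x - Real.exp (-(0:ℝ)^2/2) * S 0 := by
    apply intervalIntegral.integral_eq_sub_of_hasDerivAt
    · intro y _
      exact hg y
    · apply Continuous.intervalIntegrable
      continuity
  have hS0 : S 0 = 0 := by
    rw [S]
    convert tsum_zero with n
    simp [pow_succ]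
  rw [hint, hS0, mul_zero, sub_zero, ← mul_assoc, ← Real.exp_add]
  have h0 : x^2/2 + -x^2/2 = 0 := by ring
  rw [h0, Real.exp_zero, one_mul]
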